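/- For every integer d ≥ 2 and every real γ > 0 there exists s₀ ∈ ℕ such that for all integers s ≥ s₀, the distance Ramsey number satisfies R_D(s,s,d) ≤ 4^{(1+γ)·s/⌊d/2⌋}. -/

import Mathlib

/-- A simple graph `H` is isomorphic to a distance graph in `ℝ^d` if there is an
injective map of its vertices into `d`-dimensional Euclidean space sending
adjacent pairs to pairs at Euclidean distance exactly 1. -/
def IsDistGraphRealizable (d : ℕ) {V : Type} (H : SimpleGraph V) : Prop :=
  ∃ φ : V → EuclideanSpace ℝ (Fin d), Function.Injective φ ∧
    ∀ u v : V, H.Adj u v → dist (φ u) (φ v) = 1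

namespace DistAux

noncomputable def pa (p : ℝ) : ℝ := (1 - p ^ 2) / ((1 + p ^ 2) * Real.sqrt 2)
noncomputable def pb (p : ℝ) : ℝ := (2 * p) / ((1 + p ^ 2) * Real.sqrt 2)

lemma one_add_sq_pos (p : ℝ) : (0:ℝ) < 1 + p ^ 2 := by positivity

lemma pa_sq_add_pb_sq (p : ℝ) : pa p ^ 2 + pb p ^ 2 = 1 / 2 := by
  have h1 : (0:ℝ) < 1 + p ^ 2 := one_add_sq_pos p
  have h2 : Real.sqrt 2 ^ 2 = 2 := Real.sq_sqrt (by norm_num)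
  rw [pa, pb, div_pow, div_pow, mul_pow, mul_pow, h2, ← add_div,
    div_eq_div_iff (by positivity) (by norm_num)]
  ring

lemma param_inj {p q : ℝ} (ha : pa p = pa q) (hb : pb p = pb q) : p = q := by
  have h1 : (0:ℝ) < 1 + p ^ 2 := one_add_sq_pos p
  have h2 : (0:ℝ) < 1 + q ^ 2 := one_add_sq_pos q
  have hs : (0:ℝ) < Real.sqrt 2 := Real.sqrt_pos.mpr (by norm_num)
  rw [pa, pa, div_eq_div_iff (by positivity) (by positivity)] at ha
  rw [pb, pb, div_eq_div_iff (by positivity) (by positivity)] at hb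
  have ha' : (1 - p ^ 2) * (1 + q ^ 2) = (1 - q ^ 2) * (1 + p ^ 2) :=
    mul_right_cancel₀ hs.ne' (by ring_nf; ring_nf at ha; linarith)
  have hb' : 2 * p * (1 + q ^ 2) = 2 * q * (1 + p ^ 2) :=
    mul_right_cancel₀ hs.ne' (by ring_nf; ring_nf at hb; linarith)
  have hsq : p ^ 2 = q ^ 2 := by nlinarith [ha']
  have : p * (1 + p ^ 2) = q * (1 + p ^ 2) := by
    have h3 : p * (1 + q ^ 2) = q * (1 + p ^ 2) := by linarith
    rw [← hsq] at h3; exact h3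
  exact mul_right_cancel₀ h1.ne' this

lemma realizable_of_coloring {V : Type} (H : SimpleGraph V) {d k : ℕ} (hk : 2 * k ≤ d)
    (ι : V → ℝ) (hι : Function.Injective ι) (c : V → Fin k)
    (hc : ∀ u v, H.Adj u v → c u ≠ c v) : IsDistGraphRealizable d H := by
  classical
  have hlt1 : ∀ v : V, 2 * (c v : ℕ) < d := fun v => by have := (c v).2; omega
  have hlt2 : ∀ v : V, 2 * (c v : ℕ) + 1 < d := fun v => by have := (c v).2; omega
  set i1 : V → Fin d := fun v => ⟨2 * (c v : ℕ), hlt1 v⟩ with hi1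
  set i2 : V → Fin d := fun v => ⟨2 * (c v : ℕ) + 1, hlt2 v⟩ with hi2
  set φ : V → EuclideanSpace ℝ (Fin d) := fun v =>
    WithLp.toLp 2 (fun i => if i = i1 v then pa (ι v) else if i = i2 v then pb (ι v) else 0) with hφ
  have hval1 : ∀ v, φ v (i1 v) = pa (ι v) := fun v => by simp [hφ]
  have h12 : ∀ v, i2 v ≠ i1 v := fun v => by simp [hi1, hi2, Fin.ext_iff]
  have hval2 : ∀ v, φ v (i2 v) = pb (ι v) := fun v => by simp [hφ, h12 v]
  have hval0 : ∀ v i, i ≠ i1 v → i ≠ i2 v → φ v i = 0 := fun v i h1 h2 => by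
    simp [hφ, h1, h2]
  have hdiff : ∀ u v : V, c u ≠ c v →
      i1 u ≠ i1 v ∧ i1 u ≠ i2 v ∧ i2 u ≠ i1 v ∧ i2 u ≠ i2 v := by
    intro u v hcc
    have hnv : (c u : ℕ) ≠ (c v : ℕ) := fun h => hcc (Fin.ext h)
    refine ⟨?_, ?_, ?_, ?_⟩ <;> · simp [hi1, hi2, Fin.ext_iff]; omega
  refine ⟨φ, ?_, ?_⟩
  · intro u v h
    by_cases hcc : c u = c v
    · have e1 : i1 v = i1 u := by simp [hi1, hcc]
      have e2 : i2 v = i2 u := by simp [hi2, hcc]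
      have ha : pa (ι u) = pa (ι v) := by
        have := congrFun (congrArg WithLp.ofLp h) (i1 u)
        rwa [hval1 u, ← e1, hval1 v] at this
      have hb : pb (ι u) = pb (ι v) := by
        have := congrFun (congrArg WithLp.ofLp h) (i2 u)
        rwa [hval2 u, ← e2, hval2 v] at this
      exact hι (param_inj ha hb)
    · obtain ⟨d11, d12, d21, d22⟩ := hdiff u v hcc
      have ha : pa (ι u) = 0 := by
        have := congrFun (congrArg WithLp.ofLp h) (i1 u)
        rwa [hval1 u, hval0 v _ d11 d12] at this
      have hb : pb (ι u) = 0 := by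
        have := congrFun (congrArg WithLp.ofLp h) (i2 u)
        rwa [hval2 u, hval0 v _ d21 d22] at this
      have := pa_sq_add_pb_sq (ι u)
      rw [ha, hb] at this; norm_num at this
  · intro u v huv
    obtain ⟨d11, d12, d21, d22⟩ := hdiff u v (hc u v huv)
    have key : ∑ i : Fin d, (φ u i - φ v i) ^ 2 = 1 := by
      have hzero : ∀ i ∈ Finset.univ,
          i ∉ ({i1 u, i2 u, i1 v, i2 v} : Finset (Fin d)) → (φ u i - φ v i) ^ 2 = 0 := by
        intro i _ hi
        simp only [Finset.mem_insert, Finset.mem_singleton, not_or] at hi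
        obtain ⟨n1, n2, n3, n4⟩ := hi
        rw [hval0 u i n1 n2, hval0 v i n3 n4]; ring
      rw [← Finset.sum_subset (Finset.subset_univ _) hzero]
      have hm1 : i1 u ∉ ({i2 u, i1 v, i2 v} : Finset (Fin d)) := by
        simp [Ne.symm (h12 u), d11, d12]
      have hm2 : i2 u ∉ ({i1 v, i2 v} : Finset (Fin d)) := by simp [d21, d22]
      have hm3 : i1 v ∉ ({i2 v} : Finset (Fin d)) := by simp [Ne.symm (h12 v)]
      rw [show ({i1 u, i2 u, i1 v, i2 v} : Finset (Fin d)) =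
            insert (i1 u) (insert (i2 u) (insert (i1 v) {i2 v})) from rfl,
        Finset.sum_insert hm1, Finset.sum_insert hm2, Finset.sum_insert hm3,
        Finset.sum_singleton]
      rw [hval1 u, hval2 u, hval0 v _ d11 d12, hval0 v _ d21 d22,
        hval0 u _ (Ne.symm d11) (Ne.symm d21), hval1 v,
        hval0 u _ (Ne.symm d12) (Ne.symm d22), hval2 v]
      have h1 := pa_sq_add_pb_sq (ι u)
      have h2 := pa_sq_add_pb_sq (ι v)
      ring_nf
      ring_nf at h1 h2
      linarith
    rw [EuclideanSpace.dist_eq]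
    have : ∀ i : Fin d, dist (φ u i) (φ v i) ^ 2 = (φ u i - φ v i) ^ 2 := by
      intro i; rw [Real.dist_eq, sq_abs]
    simp_rw [this, key, Real.sqrt_one]

def CliqueOn {α : Type*} (G : SimpleGraph α) (T : Finset α) : Prop :=
  ∀ u ∈ T, ∀ v ∈ T, u ≠ v → G.Adj u v

lemma ramsey_aux {α : Type*} [DecidableEq α] :
    ∀ (N a b : ℕ), a + b ≤ N → ∀ (G : SimpleGraph α) (S : Finset α),
      (a + b).choose a ≤ S.card →
      (∃ T, T ⊆ S ∧ T.card = a + 1 ∧ CliqueOn G T) ∨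
      (∃ T, T ⊆ S ∧ T.card = b + 1 ∧ CliqueOn Gᶜ T) := by
  classical
  intro N
  induction N with
  | zero =>
    intro a b hab G S hS
    have ha : a = 0 := by omega
    have hcard : 1 ≤ S.card := by
      subst ha; simpa using hS
    obtain ⟨v, hv⟩ := Finset.card_pos.mp hcard
    exact Or.inl ⟨{v}, Finset.singleton_subset_iff.mpr hv, by simp [ha],
      fun u hu w hw huw => absurd (by
        simp only [Finset.mem_singleton] at hu hw; rw [hu, hw]) huw⟩
  | succ N ih =>
    intro a b hab G S hS
    match a, b with
    | 0, b =>
      have hcard : 1 ≤ S.card := by simpa using hS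
      obtain ⟨v, hv⟩ := Finset.card_pos.mp hcard
      exact Or.inl ⟨{v}, Finset.singleton_subset_iff.mpr hv, by simp,
        fun u hu w hw huw => absurd (by
          simp only [Finset.mem_singleton] at hu hw; rw [hu, hw]) huw⟩
    | a + 1, 0 =>
      have hcard : 1 ≤ S.card := by
        calc 1 ≤ (a + 1 + 0).choose (a + 1) := by simp
        _ ≤ S.card := hS
      obtain ⟨v, hv⟩ := Finset.card_pos.mp hcard
      exact Or.inr ⟨{v}, Finset.singleton_subset_iff.mpr hv, by simp,
        fun u hu w hw huw => absurd (by
          simp only [Finset.mem_singleton] at hu hw; rw [hu, hw]) huw⟩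
    | a + 1, b + 1 =>
      have hcard : 1 ≤ S.card :=
        le_trans (Nat.choose_pos (by omega)) hS
      obtain ⟨v, hv⟩ := Finset.card_pos.mp hcard
      set N1 : Finset α := (S.erase v).filter (fun u => G.Adj v u) with hN1
      set N2 : Finset α := (S.erase v).filter (fun u => ¬ G.Adj v u) with hN2
      have hsplit : N1.card + N2.card = S.card - 1 := by
        rw [hN1, hN2, Finset.card_filter_add_card_filter_not,
          Finset.card_erase_of_mem hv]
      have hpascal : (a + 1 + (b + 1)).choose (a + 1)
          = (a + (b + 1)).choose a + (a + 1 + b).choose (a + 1) := by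
        have : a + 1 + (b + 1) = (a + (b + 1)) + 1 := by omega
        rw [this, Nat.choose_succ_succ]
        congr 2
        omega
      have hcases : (a + (b + 1)).choose a ≤ N1.card ∨
          (a + 1 + b).choose (a + 1) ≤ N2.card := by omega
      rcases hcases with hc | hc
      · rcases ih a (b + 1) (by omega) G N1 hc with ⟨T, hTs, hTc, hTcl⟩ | ⟨T, hTs, hTc, hTcl⟩
        · refine Or.inl ⟨insert v T, ?_, ?_, ?_⟩
          · intro x hx
            rcases Finset.mem_insert.mp hx with h | h
            · rwa [h]
            · exact Finset.mem_of_mem_erase (Finset.mem_of_mem_filter _ (hTs h))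
          · have hvT : v ∉ T := fun h =>
              Finset.notMem_erase v S (Finset.mem_of_mem_filter _ (hTs h))
            rw [Finset.card_insert_of_notMem hvT, hTc]
          · intro x hx y hy hxy
            rcases Finset.mem_insert.mp hx with h | h <;>
              rcases Finset.mem_insert.mp hy with h' | h'
            · exact absurd (h.trans h'.symm) hxy
            · subst h; exact (Finset.mem_filter.mp (hTs h')).2
            · subst h'; exact ((Finset.mem_filter.mp (hTs h)).2).symm
            · exact hTcl x h y h' hxy
        · exact Or.inr ⟨T, fun x hx =>
            Finset.mem_of_mem_erase (Finset.mem_of_mem_filter _ (hTs hx)), hTc, hTcl⟩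
      · rcases ih (a + 1) b (by omega) G N2 hc with ⟨T, hTs, hTc, hTcl⟩ | ⟨T, hTs, hTc, hTcl⟩
        · exact Or.inl ⟨T, fun x hx =>
            Finset.mem_of_mem_erase (Finset.mem_of_mem_filter _ (hTs hx)), hTc, hTcl⟩
        · refine Or.inr ⟨insert v T, ?_, ?_, ?_⟩
          · intro x hx
            rcases Finset.mem_insert.mp hx with h | h
            · rwa [h]
            · exact Finset.mem_of_mem_erase (Finset.mem_of_mem_filter _ (hTs h))
          · have hvT : v ∉ T := fun h =>
              Finset.notMem_erase v S (Finset.mem_of_mem_filter _ (hTs h))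
            rw [Finset.card_insert_of_notMem hvT, hTc]
          · intro x hx y hy hxy
            rcases Finset.mem_insert.mp hx with h | h <;>
              rcases Finset.mem_insert.mp hy with h' | h'
            · exact absurd (h.trans h'.symm) hxy
            · have hmem := Finset.mem_filter.mp (hTs h')
              rw [h] at hxy ⊢
              exact (SimpleGraph.compl_adj G v y).mpr ⟨hxy, hmem.2⟩
            · have hmem := Finset.mem_filter.mp (hTs h)
              rw [h'] at hxy ⊢
              exact ((SimpleGraph.compl_adj G v x).mpr ⟨hxy.symm, hmem.2⟩).symm
            · exact hTcl x h y h' hxy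

lemma extract {α : Type*} [DecidableEq α] (G : SimpleGraph α) (t : ℕ) (ht : 1 ≤ t) :
    ∀ (j : ℕ) (S : Finset α), ((t - 1) + (t - 1)).choose (t - 1) + j * t ≤ S.card + t →
    ∃ F : Fin j → Finset α, (∀ i i', i ≠ i' → Disjoint (F i) (F i')) ∧
      ∀ i, F i ⊆ S ∧ (F i).card = t ∧ (CliqueOn G (F i) ∨ CliqueOn Gᶜ (F i)) := by
  intro j
  induction j with
  | zero => exact fun S _ => ⟨fun i => i.elim0, fun i => i.elim0, fun i => i.elim0⟩
  | succ j ih =>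
    intro S hS
    have hjt : (j + 1) * t = j * t + t := by ring
    have h1 : ((t - 1) + (t - 1)).choose (t - 1) ≤ S.card := by
      rw [hjt] at hS; omega
    have hram := ramsey_aux ((t - 1) + (t - 1)) (t - 1) (t - 1) le_rfl G S h1
    have hT : ∃ T, T ⊆ S ∧ T.card = t ∧ (CliqueOn G T ∨ CliqueOn Gᶜ T) := by
      rcases hram with ⟨T, h1, h2, h3⟩ | ⟨T, h1, h2, h3⟩
      · exact ⟨T, h1, by omega, Or.inl h3⟩
      · exact ⟨T, h1, by omega, Or.inr h3⟩
    obtain ⟨T, hTS, hTcard, hTor⟩ := hT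
    have htS : t ≤ S.card := hTcard ▸ Finset.card_le_card hTS
    have hcards : (S \ T).card = S.card - t := by
      rw [Finset.card_sdiff_of_subset hTS, hTcard]
    have h2 : ((t - 1) + (t - 1)).choose (t - 1) + j * t ≤ (S \ T).card + t := by
      rw [hjt] at hS; omega
    obtain ⟨F0, hF0disj, hF0⟩ := ih (S \ T) h2
    have hdT : ∀ i', Disjoint T (F0 i') := fun i' =>
      Finset.disjoint_sdiff.mono_right (hF0 i').1
    refine ⟨Fin.cons T F0, ?_, ?_⟩
    · intro i i'
      refine Fin.cases ?_ ?_ i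
      · refine Fin.cases ?_ ?_ i'
        · exact fun h => absurd rfl h
        · intro i'' _
          simpa using hdT i''
      · intro ii
        refine Fin.cases ?_ ?_ i'
        · intro _
          simpa using (hdT ii).symm
        · intro i'' h
          simpa using hF0disj ii i'' (fun hh => h (by rw [hh]))
    · intro i
      refine Fin.cases ?_ ?_ i
      · simpa using ⟨hTS, hTcard, hTor⟩
      · intro i'
        obtain ⟨hs, hc, ho⟩ := hF0 i'
        simpa using ⟨hs.trans Finset.sdiff_subset, hc, ho⟩

lemma parts_realizable {n d k t s : ℕ} (hkd : 2 * k ≤ d) (H : SimpleGraph (Fin n))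
    (F : Fin k → Finset (Fin n))
    (hdisj : ∀ i i', i ≠ i' → Disjoint (F i) (F i'))
    (hcard : ∀ i, (F i).card = t)
    (hind : ∀ i, ∀ u ∈ F i, ∀ v ∈ F i, ¬ H.Adj u v)
    (hst : s ≤ k * t) :
    ∃ S : Finset (Fin n), S.card = s ∧
      IsDistGraphRealizable d (H.induce (↑S : Set (Fin n))) := by
  classical
  set U : Finset (Fin n) := Finset.univ.biUnion F with hU
  have hUcard : U.card = k * t := by
    rw [hU, Finset.card_biUnion (fun i _ i' _ h => hdisj i i' h)]
    simp [hcard, Finset.sum_const, mul_comm]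
  obtain ⟨S, hSU, hScard⟩ := Finset.exists_subset_card_eq (s := U) (n := s) (by omega)
  have hmem : ∀ v : (↑S : Set (Fin n)), ∃ i, (v : Fin n) ∈ F i := by
    intro v
    have hvU : (v : Fin n) ∈ U := hSU v.2
    rw [hU] at hvU
    simpa using Finset.mem_biUnion.mp hvU
  set c : (↑S : Set (Fin n)) → Fin k := fun v => (hmem v).choose with hc
  have hcmem : ∀ v, (v : Fin n) ∈ F (c v) := fun v => (hmem v).choose_spec
  refine ⟨S, hScard, ?_⟩
  refine realizable_of_coloring _ hkd (fun v => (((v : Fin n) : ℕ) : ℝ)) ?_ c ?_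
  · intro u v h
    have h' : (((u : Fin n) : ℕ) : ℝ) = (((v : Fin n) : ℕ) : ℝ) := h
    have h'' : ((u : Fin n) : ℕ) = ((v : Fin n) : ℕ) := by exact_mod_cast h'
    exact Subtype.ext (Fin.ext h'')
  · intro u v hadj hcc
    have hadj' : H.Adj (u : Fin n) (v : Fin n) := hadj
    have hv : (v : Fin n) ∈ F (c u) := by rw [hcc]; exact hcmem v
    exact hind (c u) _ (hcmem u) _ hv hadj'

lemma mem_good {n s k t d : ℕ} (hk : 1 ≤ k) (hkd : 2 * k ≤ d) (ht : 1 ≤ t)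
    (hst : s ≤ k * t)
    (hn : ((t - 1) + (t - 1)).choose (t - 1) + (2 * k - 1) * t ≤ n + t)
    (G : SimpleGraph (Fin n)) :
    (∃ S : Finset (Fin n), S.card = s ∧
      IsDistGraphRealizable d (G.induce (↑S : Set (Fin n)))) ∨
    (∃ S : Finset (Fin n), S.card = s ∧
      IsDistGraphRealizable d (Gᶜ.induce (↑S : Set (Fin n)))) := by
  classical
  obtain ⟨F, hdisj, hF⟩ := extract G t ht (2 * k - 1) Finset.univ (by simpa using hn)
  have key : ∀ (H : SimpleGraph (Fin n)) (J : Finset (Fin (2 * k - 1))), J.card = k →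
      (∀ i ∈ J, ∀ u ∈ F i, ∀ v ∈ F i, ¬ H.Adj u v) →
      ∃ S : Finset (Fin n), S.card = s ∧
        IsDistGraphRealizable d (H.induce (↑S : Set (Fin n))) := by
    intro H J hJcard hJind
    set e : Fin k → {x // x ∈ J} := fun i => J.equivFin.symm (finCongr hJcard.symm i) with he
    have heinj : Function.Injective e :=
      J.equivFin.symm.injective.comp (finCongr hJcard.symm).injective
    refine parts_realizable hkd H (fun i => F (e i)) ?_ (fun i => (hF _).2.1) ?_ hst
    · intro i i' hne
      refine hdisj _ _ (fun hcc => hne (heinj (Subtype.ext hcc)))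
    · intro i u hu v hv
      exact hJind (e i) (e i).2 u hu v hv
  set I : Finset (Fin (2 * k - 1)) :=
    Finset.univ.filter (fun i => CliqueOn G (F i)) with hI
  have hIc : I.card +
      (Finset.univ.filter (fun i => ¬ CliqueOn G (F i))).card = 2 * k - 1 := by
    rw [hI, Finset.card_filter_add_card_filter_not]
    simp
  rcases le_or_gt k I.card with hk' | hk'
  · obtain ⟨J, hJI, hJcard⟩ := Finset.exists_subset_card_eq hk'
    refine Or.inr (key Gᶜ J hJcard ?_)
    intro i hiJ u hu v hv hadj
    have hcl : CliqueOn G (F i) := (Finset.mem_filter.mp (hJI hiJ)).2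
    obtain ⟨hne, hnadj⟩ := (SimpleGraph.compl_adj G u v).mp hadj
    exact hnadj (hcl u hu v hv hne)
  · have hk2 : k ≤ (Finset.univ.filter (fun i => ¬ CliqueOn G (F i))).card := by omega
    obtain ⟨J, hJI, hJcard⟩ := Finset.exists_subset_card_eq hk2
    refine Or.inl (key G J hJcard ?_)
    intro i hiJ u hu v hv hadj
    have hncl : ¬ CliqueOn G (F i) := (Finset.mem_filter.mp (hJI hiJ)).2
    have hcl : CliqueOn Gᶜ (F i) := (hF i).2.2.resolve_left hncl
    have hne : u ≠ v := hadj.ne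
    exact ((SimpleGraph.compl_adj G u v).mp (hcl u hu v hv hne)).2 hadj

lemma choose_le_four_pow (m : ℕ) : (m + m).choose m ≤ 4 ^ m := by
  calc (m + m).choose m ≤ ∑ i ∈ Finset.range (m + m + 1), (m + m).choose i :=
        Finset.single_le_sum (fun i _ => Nat.zero_le _) (Finset.mem_range.mpr (by omega))
    _ = 2 ^ (m + m) := Nat.sum_range_choose (m + m)
    _ = 4 ^ m := by
        rw [show (4 : ℕ) = 2 ^ 2 from rfl, ← pow_mul]
        congr 1
        omega

end DistAux

/-- The distance Ramsey number `R_D(s, t, d)`. -/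
noncomputable def distRamsey (s t d : ℕ) : ℕ :=
  sInf {n : ℕ | ∀ G : SimpleGraph (Fin n),
    (∃ S : Finset (Fin n), S.card = s ∧
      IsDistGraphRealizable d (G.induce (↑S : Set (Fin n)))) ∨
    (∃ S : Finset (Fin n), S.card = t ∧
      IsDistGraphRealizable d (Gᶜ.induce (↑S : Set (Fin n))))}

set_option maxHeartbeats 1000000 in
theorem distRamsey_upper_bound (d : ℕ) (hd : 2 ≤ d) (γ : ℝ) (hγ : 0 < γ) :
    ∃ s₀ : ℕ, ∀ s : ℕ, s₀ ≤ s →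
      (distRamsey s s d : ℝ) ≤ (4 : ℝ) ^ ((1 + γ) * (s : ℝ) / ((d / 2 : ℕ) : ℝ)) := by
  set k := d / 2 with hkdef
  have hk1 : 1 ≤ k := by rw [hkdef]; omega
  have hkd : 2 * k ≤ d := by rw [hkdef]; omega
  have hkled : k ≤ d := by rw [hkdef]; omega
  have hd0 : 0 < d := by omega
  refine ⟨d * (d + 4) + ⌈(d : ℝ) / (2 * γ)⌉₊ + d, ?_⟩
  intro s hs
  have hsd : d * (d + 4) ≤ s := by omega
  have hsceil : ⌈(d : ℝ) / (2 * γ)⌉₊ ≤ s := by omega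
  have hsdk : d ≤ s := by
    have h := Nat.le_mul_of_pos_right d (show 0 < d + 4 by omega)
    omega
  obtain ⟨m1, hm1def⟩ : ∃ m1, s / k = m1 := ⟨_, rfl⟩
  obtain ⟨t, htdef⟩ : ∃ t, m1 + 1 = t := ⟨_, rfl⟩
  have ht1 : 1 ≤ t := by omega
  have htm1 : t - 1 = m1 := by omega
  obtain ⟨R, hRdef⟩ : ∃ R, ((t - 1) + (t - 1)).choose (t - 1) = R := ⟨_, rfl⟩
  obtain ⟨n, hndef⟩ : ∃ n, R + (2 * k - 2) * t = n := ⟨_, rfl⟩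
  have hdivmod : k * m1 + s % k = s := by
    have h1 := Nat.div_add_mod s k
    rw [hm1def] at h1
    exact h1
  have hmodk : s % k < k := Nat.mod_lt s (by omega)
  have hkt : k * t = k * m1 + k := by rw [← htdef]; ring
  have hst : s ≤ k * t := by
    have := Nat.zero_le (s % k)
    linarith
  have hcond : R + (2 * k - 1) * t ≤ n + t := by
    have h3 : (2 * k - 1) * t = (2 * k - 2) * t + t := by
      have h4 : 2 * k - 1 = (2 * k - 2) + 1 := by omega
      rw [h4, add_mul, one_mul]
    rw [← hndef, h3, add_assoc]
  have hle : distRamsey s s d ≤ n := by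
    apply Nat.sInf_le
    intro G
    exact DistAux.mem_good hk1 hkd ht1 hst (by rw [hRdef]; exact hcond) G
  have hR4 : R ≤ 4 ^ m1 := by
    rw [← hRdef, htm1]; exact DistAux.choose_le_four_pow m1
  have hlin : (2 * k - 2) * t ≤ 4 * s := by
    have h3 : (2 * k - 2) * t ≤ 2 * k * t := Nat.mul_le_mul_right t (by omega)
    have h4 : 2 * k * t = 2 * (k * m1) + 2 * k := by rw [← htdef]; ring
    have h5 : k * m1 ≤ s := by
      have := Nat.zero_le (s % k)
      linarith
    linarith
  have hnbound : n ≤ 4 ^ m1 + 4 * s := by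
    rw [← hndef]; exact Nat.add_le_add hR4 hlin
  -- exponential beats linear, in ℕ
  obtain ⟨m, hmdef⟩ : ∃ m, s / d = m := ⟨_, rfl⟩
  have hm4 : d + 4 ≤ m := by
    rw [← hmdef, Nat.le_div_iff_mul_le hd0]
    calc (d + 4) * d = d * (d + 4) := by ring
      _ ≤ s := hsd
  have h2d : d < 2 ^ d := Nat.lt_two_pow_self
  have h2m : 16 * d ≤ 2 ^ m := by
    calc 16 * d ≤ 16 * 2 ^ d := Nat.mul_le_mul_left 16 (le_of_lt h2d)
      _ = 2 ^ (d + 4) := by rw [pow_add]; ring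
      _ ≤ 2 ^ m := Nat.pow_le_pow_right (by omega) (by omega)
  have hmm : m ≤ 2 ^ m := le_of_lt (Nat.lt_two_pow_self)
  have hsm : s ≤ d * m + d := by
    have h1 := Nat.div_add_mod s d
    rw [hmdef] at h1
    have h2 : s % d < d := Nat.mod_lt s hd0
    linarith
  have hexp : 8 * s ≤ 4 ^ m := by
    have hm1' : 1 ≤ m := by omega
    have h6 : 8 * s ≤ 16 * d * m := by nlinarith
    calc 8 * s ≤ 16 * d * m := h6
      _ ≤ 2 ^ m * 2 ^ m := Nat.mul_le_mul h2m hmm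
      _ = 4 ^ m := by
          rw [← pow_add, show (4 : ℕ) = 2 ^ 2 from rfl, ← pow_mul]
          congr 1
          omega
  -- move to ℝ
  have hd0R : (0 : ℝ) < (d : ℝ) := by exact_mod_cast hd0
  have hk0R : (0 : ℝ) < (k : ℝ) := by exact_mod_cast hk1
  have hsR : (0 : ℝ) ≤ (s : ℝ) := Nat.cast_nonneg s
  have h4x : ∀ y z : ℝ, y ≤ z → (4 : ℝ) ^ y ≤ (4 : ℝ) ^ z := fun y z h =>
    Real.rpow_le_rpow_of_exponent_le (by norm_num) h
  have hdk : (s : ℝ) / (d : ℝ) ≤ (s : ℝ) / (k : ℝ) :=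
    div_le_div_of_nonneg_left hsR hk0R (by exact_mod_cast hkled)
  have hm1x : ((m1 : ℕ) : ℝ) ≤ (s : ℝ) / (k : ℝ) := by
    rw [← hm1def]; exact Nat.cast_div_le
  have hmx : ((m : ℕ) : ℝ) ≤ (s : ℝ) / (k : ℝ) := by
    refine le_trans ?_ hdk
    rw [← hmdef]; exact Nat.cast_div_le
  have hpow1 : ((4 ^ m1 : ℕ) : ℝ) ≤ (4 : ℝ) ^ ((s : ℝ) / (k : ℝ)) := by
    rw [Nat.cast_pow]
    calc ((4 : ℝ)) ^ (m1 : ℕ) = (4 : ℝ) ^ ((m1 : ℕ) : ℝ) := (Real.rpow_natCast 4 m1).symm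
      _ ≤ _ := h4x _ _ hm1x
  have hpow2 : 8 * (s : ℝ) ≤ (4 : ℝ) ^ ((s : ℝ) / (k : ℝ)) := by
    have h1 : ((8 * s : ℕ) : ℝ) ≤ ((4 ^ m : ℕ) : ℝ) := by exact_mod_cast hexp
    rw [Nat.cast_pow] at h1
    calc 8 * (s : ℝ) = ((8 * s : ℕ) : ℝ) := by push_cast; ring
      _ ≤ (4 : ℝ) ^ (m : ℕ) := h1
      _ = (4 : ℝ) ^ ((m : ℕ) : ℝ) := (Real.rpow_natCast 4 m).symm
      _ ≤ _ := h4x _ _ hmx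
  have hceil : (d : ℝ) / (2 * γ) ≤ (s : ℝ) := by
    have h1 : (⌈(d : ℝ) / (2 * γ)⌉₊ : ℝ) ≤ (s : ℝ) := by exact_mod_cast hsceil
    exact le_trans (Nat.le_ceil _) h1
  have hgx : 1 / 2 ≤ γ * ((s : ℝ) / (k : ℝ)) := by
    rw [div_le_iff₀ (by positivity : (0 : ℝ) < 2 * γ)] at hceil
    have h5' : 1 / 2 ≤ γ * ((s : ℝ) / (d : ℝ)) := by
      rw [show γ * ((s : ℝ) / (d : ℝ)) = γ * (s : ℝ) / (d : ℝ) by ring,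
        le_div_iff₀ hd0R]
      nlinarith
    have h4' : γ * ((s : ℝ) / (d : ℝ)) ≤ γ * ((s : ℝ) / (k : ℝ)) :=
      mul_le_mul_of_nonneg_left hdk hγ.le
    linarith
  have h42 : (2 : ℝ) ≤ (4 : ℝ) ^ (γ * ((s : ℝ) / (k : ℝ))) := by
    have h12 : (4 : ℝ) ^ ((1 : ℝ) / 2) = 2 := by
      rw [show (4 : ℝ) = 2 ^ (2 : ℕ) by norm_num, ← Real.rpow_natCast (2 : ℝ) 2,
        ← Real.rpow_mul (by norm_num)]
      norm_num
    calc (2 : ℝ) = 4 ^ ((1 : ℝ) / 2) := h12.symm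
      _ ≤ _ := h4x _ _ hgx
  have hApos : (0 : ℝ) < (4 : ℝ) ^ ((s : ℝ) / (k : ℝ)) :=
    Real.rpow_pos_of_pos (by norm_num) _
  have hrhs : (4 : ℝ) ^ ((1 + γ) * (s : ℝ) / ((k : ℕ) : ℝ)) =
      (4 : ℝ) ^ ((s : ℝ) / (k : ℝ)) * (4 : ℝ) ^ (γ * ((s : ℝ) / (k : ℝ))) := by
    rw [← Real.rpow_add (by norm_num)]
    congr 1
    field_simp
  calc (distRamsey s s d : ℝ) ≤ (n : ℝ) := by exact_mod_cast hle
    _ ≤ ((4 ^ m1 + 4 * s : ℕ) : ℝ) := by exact_mod_cast hnbound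
    _ = ((4 ^ m1 : ℕ) : ℝ) + 4 * (s : ℝ) := by push_cast; ring
    _ ≤ (4 : ℝ) ^ ((s : ℝ) / (k : ℝ)) + (1 / 2) * (4 : ℝ) ^ ((s : ℝ) / (k : ℝ)) := by
        linarith
    _ ≤ (4 : ℝ) ^ ((s : ℝ) / (k : ℝ)) * (4 : ℝ) ^ (γ * ((s : ℝ) / (k : ℝ))) := by
        have h7 := mul_le_mul_of_nonneg_left h42 hApos.le
        linarith
    _ = _ := hrhs.symm
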